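/- Let C₁ and C₂ be two circles in the standard 2-sphere S² that intersect transversally, i.e., C₁ ∩ C₂ consists of exactly two points. Then there exists a surjective map Γ : C₁ ∪ C₂ → {1, 2, 3, 4, 5} such that for every circle C in S², the image Γ(C ∩ (C₁ ∪ C₂)) has at most 3 elements. -/

import Mathlib

open RealInnerProductSpace EuclideanGeometry Real
set_option maxHeartbeats 1600000
noncomputable section
local notation "E" => EuclideanSpace ℝ (Fin 3)


/-- inversion about `p` with radius 1, as a vector-space formula -/
def inv3 (p z : E) : E := p + (‖z - p‖^2)⁻¹ • (z - p)

lemma sq_eq_of_sq_eq {A B : ℝ} (h : A^2 = B^2) (hA : 0 ≤ A) (hB : 0 ≤ B) : A = B := by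
  nlinarith

lemma inv3_dist (p a b : E) (ha : a ≠ p) (hb : b ≠ p) :
    dist (inv3 p a) (inv3 p b) = dist a b / (dist a p * dist b p) := by
  have hx : ‖a - p‖ ≠ 0 := by simpa [sub_eq_zero] using ha
  have hy : ‖b - p‖ ≠ 0 := by simpa [sub_eq_zero] using hb
  have key : ‖(‖a - p‖^2)⁻¹ • (a - p) - (‖b - p‖^2)⁻¹ • (b - p)‖
      = ‖a - b‖ / (‖a - p‖ * ‖b - p‖) := by
    set x := a - p
    set y := b - p
    have hxy : a - b = x - y := by simp [x, y]
    apply sq_eq_of_sq_eq _ (norm_nonneg _) (by positivity)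
    have e1 : ‖(‖x‖^2)⁻¹ • x - (‖y‖^2)⁻¹ • y‖^2
        = (‖x‖^2)⁻¹^2 * ‖x‖^2 - 2 * ((‖x‖^2)⁻¹ * (‖y‖^2)⁻¹ * ⟪x, y⟫) + (‖y‖^2)⁻¹^2 * ‖y‖^2 := by
      rw [norm_sub_sq_real, inner_smul_left, inner_smul_right, norm_smul, norm_smul]
      simp [real_inner_self_eq_norm_sq, mul_pow]
      ring
    rw [e1, hxy, div_pow, norm_sub_sq_real x y, mul_pow]
    field_simp
    ring
  rw [dist_eq_norm, dist_eq_norm, dist_eq_norm, inv3, inv3]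
  have : p + (‖a - p‖^2)⁻¹ • (a - p) - (p + (‖b - p‖^2)⁻¹ • (b - p))
      = (‖a - p‖^2)⁻¹ • (a - p) - (‖b - p‖^2)⁻¹ • (b - p) := by abel
  rw [this, key, dist_eq_norm]

lemma inv3_sphere (p o z : E) (R : ℝ) (hz : ‖z - o‖ = R) (hzp : z ≠ p)
    (hD : ‖o - p‖^2 - R^2 ≠ 0) :
    dist (inv3 p z) (p + (‖o - p‖^2 - R^2)⁻¹ • (o - p)) = R / |‖o - p‖^2 - R^2| := by
  have hx : ‖z - p‖ ≠ 0 := by simpa [sub_eq_zero] using hzp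
  set x := z - p with hxdef
  set w := o - p with hwdef
  set D := ‖o - p‖^2 - R^2 with hDdef
  have hR : 0 ≤ R := hz ▸ norm_nonneg _
  have hxw : ‖x - w‖ = R := by
    have : x - w = z - o := by simp [hxdef, hwdef]
    rw [this, hz]
  have hinner : 2 * ⟪x, w⟫ = ‖x‖^2 + D := by
    have := norm_sub_sq_real x w
    rw [hxw] at this
    have hwn : ‖w‖^2 = D + R^2 := by simp [hDdef, hwdef]
    nlinarith [this]
  rw [dist_eq_norm]
  have e0 : inv3 p z - (p + D⁻¹ • w) = (‖x‖^2)⁻¹ • x - D⁻¹ • w := by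
    rw [inv3, hxdef]; abel
  rw [e0]
  apply sq_eq_of_sq_eq _ (norm_nonneg _) (by positivity)
  have e1 : ‖(‖x‖^2)⁻¹ • x - D⁻¹ • w‖^2
      = (‖x‖^2)⁻¹^2 * ‖x‖^2 - 2 * ((‖x‖^2)⁻¹ * D⁻¹ * ⟪x, w⟫) + D⁻¹^2 * ‖w‖^2 := by
    rw [norm_sub_sq_real, inner_smul_left, inner_smul_right, norm_smul, norm_smul]
    simp [real_inner_self_eq_norm_sq, mul_pow]
    ring
  have hwn : ‖w‖^2 = D + R^2 := by simp [hDdef, hwdef]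
  rw [e1, div_pow, sq_abs]
  have hx2 : ‖x‖^2 ≠ 0 := pow_ne_zero 2 hx
  set In := ⟪x, w⟫ with hIn
  set n := ‖x‖^2 with hn
  rw [hwn]
  have hIn2 : In = (n + D)/2 := by linarith [hinner]
  rw [hIn2]
  field_simp
  ring




/-- normal form of a circle-plane -/
lemma plane_normal (A : AffineSubspace ℝ E) (hA : Module.finrank ℝ A.direction = 2)
    (hb : ∃ x ∈ A, ‖x‖ < 1) :
    ∃ n : E, ∃ c : ℝ, ‖n‖ = 1 ∧ |c| < 1 ∧ ∀ z : E, z ∈ A ↔ ⟪n, z⟫ = c := by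
  obtain ⟨xx, hx, hanorm⟩ := hb
  obtain ⟨a, ha⟩ : ∃ a, a ∈ A := ⟨xx, hx⟩
  have hdim : Module.finrank ℝ (A.direction)ᗮ = 1 := by
    have := Submodule.finrank_add_finrank_orthogonal (K := A.direction)
    rw [hA, finrank_euclideanSpace_fin] at this
    omega
  obtain ⟨v, hv0, hvspan⟩ := finrank_eq_one_iff'.mp hdim
  set n : E := (‖(v : E)‖)⁻¹ • (v : E) with hn
  have hvne : (v : E) ≠ 0 := by
    simpa using Subtype.coe_injective.ne hv0
  have hvnorm : ‖(v : E)‖ ≠ 0 := norm_ne_zero_iff.mpr hvne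
  have hnnorm : ‖n‖ = 1 := by
    rw [hn, norm_smul]
    simp [abs_of_nonneg (inv_nonneg.mpr (norm_nonneg _)), inv_mul_cancel₀ hvnorm]
  have hspan : (A.direction)ᗮ = Submodule.span ℝ {n} := by
    apply le_antisymm
    · intro w hw
      obtain ⟨c, hc⟩ := hvspan ⟨w, hw⟩
      have : c • (v : E) = w := by
        have := congrArg (Subtype.val) hc
        simpa using this
      rw [← this]
      refine Submodule.mem_span_singleton.mpr ⟨c * ‖(v : E)‖, ?_⟩
      rw [hn, smul_smul]
      field_simp
    · rw [Submodule.span_le]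
      intro w hw
      simp only [Set.mem_singleton_iff] at hw
      subst hw
      exact Submodule.smul_mem _ _ v.2
  have hmem : ∀ z : E, z ∈ A ↔ ⟪n, z⟫ = ⟪n, a⟫ := by
    intro z
    rw [← AffineSubspace.vsub_right_mem_direction_iff_mem ha z]
    have : A.direction = (Submodule.span ℝ {n})ᗮ := by
      rw [← hspan, Submodule.orthogonal_orthogonal]
    rw [this, Submodule.mem_orthogonal_singleton_iff_inner_right]
    constructor
    · intro h
      have : ⟪n, z - a⟫ = 0 := h
      rw [inner_sub_right] at this
      linarith
    · intro h
      show ⟪n, z - a⟫ = 0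
      rw [inner_sub_right]
      linarith
  refine ⟨n, ⟪n, a⟫, hnnorm, ?_, hmem⟩
  have h1 : ⟪n, xx⟫ = ⟪n, a⟫ := (hmem xx).mp hx
  rw [← h1]
  calc |⟪n, xx⟫| ≤ ‖n‖ * ‖xx‖ := abs_real_inner_le_norm n xx
  _ < 1 := by rw [hnnorm]; simpa using hanorm




lemma orth_pair_parallel (n m : E) (hn : n ≠ 0) (hind : ¬ ∃ t : ℝ, m = t • n)
    (u w : E) (hnu : ⟪n, u⟫ = 0) (hmu : ⟪m, u⟫ = 0) (hnw : ⟪n, w⟫ = 0) (hmw : ⟪m, w⟫ = 0) :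
    ∃ v : E, (∃ a : ℝ, u = a • v) ∧ (∃ b : ℝ, w = b • v) := by
  have hm : m ≠ 0 := by
    intro h; exact hind ⟨0, by simp [h]⟩
  set W : Submodule ℝ E := (Submodule.span ℝ {n} ⊔ Submodule.span ℝ {m})ᗮ with hW
  have hmemW : ∀ y : E, ⟪n, y⟫ = 0 → ⟪m, y⟫ = 0 → y ∈ W := by
    intro y h1 h2
    rw [hW, ← Submodule.inf_orthogonal]
    exact ⟨Submodule.mem_orthogonal_singleton_iff_inner_right.mpr h1,
      Submodule.mem_orthogonal_singleton_iff_inner_right.mpr h2⟩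
  have hinf : Submodule.span ℝ {n} ⊓ Submodule.span ℝ {m} = ⊥ := by
    rw [Submodule.eq_bot_iff]
    rintro x ⟨hx1, hx2⟩
    obtain ⟨a, rfl⟩ := Submodule.mem_span_singleton.mp hx1
    obtain ⟨b, hb⟩ := Submodule.mem_span_singleton.mp hx2
    by_contra hx0
    have ha : a ≠ 0 := by rintro rfl; simp at hx0
    have hb0 : b ≠ 0 := by rintro rfl; simp at hb; exact hx0 hb.symm
    exact hind ⟨b⁻¹ * a, by rw [mul_smul, ← hb, inv_smul_smul₀ hb0]⟩
  have hsup : Module.finrank ℝ ↥(Submodule.span ℝ {n} ⊔ Submodule.span ℝ {m}) = 2 := by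
    have := Submodule.finrank_sup_add_finrank_inf_eq (Submodule.span ℝ {n}) (Submodule.span ℝ {m})
    rw [hinf, finrank_span_singleton hn, finrank_span_singleton hm] at this
    simpa using this
  have hWdim : Module.finrank ℝ ↥W = 1 := by
    have := Submodule.finrank_add_finrank_orthogonal
      (K := Submodule.span ℝ {n} ⊔ Submodule.span ℝ {m})
    rw [hsup, finrank_euclideanSpace_fin, ← hW] at this
    omega
  obtain ⟨v0, _, hv0span⟩ := finrank_eq_one_iff'.mp hWdim
  refine ⟨(v0 : E), ?_, ?_⟩
  · obtain ⟨a, ha⟩ := hv0span ⟨u, hmemW u hnu hmu⟩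
    exact ⟨a, by simpa using (congrArg Subtype.val ha).symm⟩
  · obtain ⟨b, hbb⟩ := hv0span ⟨w, hmemW w hnw hmw⟩
    exact ⟨b, by simpa using (congrArg Subtype.val hbb).symm⟩

lemma sphere_line_two {x y z v : E} (hx : ‖x‖ = 1) (hy : ‖y‖ = 1) (hz : ‖z‖ = 1)
    (a b : ℝ) (hya : y - x = a • v) (hzb : z - x = b • v)
    (hxy : x ≠ y) (hxz : x ≠ z) (hyz : y ≠ z) : False := by
  have hv : v ≠ 0 := by
    rintro rfl
    apply hxy
    have : y - x = 0 := by rw [hya]; simp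
    rw [sub_eq_zero] at this; exact this.symm
  have ha : a ≠ 0 := by
    rintro rfl
    apply hxy
    have : y - x = 0 := by rw [hya]; simp
    rw [sub_eq_zero] at this; exact this.symm
  have hb : b ≠ 0 := by
    rintro rfl
    apply hxz
    have : z - x = 0 := by rw [hzb]; simp
    rw [sub_eq_zero] at this; exact this.symm
  have hyx : y = x + a • v := by rw [← hya]; abel
  have hzx : z = x + b • v := by rw [← hzb]; abel
  set I : ℝ := ⟪x, v⟫ with hI
  set V : ℝ := ‖v‖^2 with hV
  have expand : ∀ t : ℝ, ‖x + t • v‖^2 = 1 + 2*t*I + t^2*V := by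
    intro t
    rw [norm_add_sq_real, inner_smul_right, norm_smul, mul_pow, Real.norm_eq_abs, sq_abs,
      show ‖x‖^2 = 1 by rw [hx]; norm_num, ← hI, ← hV]
    ring
  have e1 : 2*a*I + a^2*V = 0 := by
    have h := expand a
    rw [← hyx, hy] at h
    nlinarith [h]
  have e2 : 2*b*I + b^2*V = 0 := by
    have h := expand b
    rw [← hzx, hz] at h
    nlinarith [h]
  have hvn : V ≠ 0 := by
    rw [hV]; exact pow_ne_zero 2 (norm_ne_zero_iff.mpr hv)
  have d1 : 2*I + a*V = 0 := by
    have h' : a * (2*I + a*V) = 0 := by linear_combination e1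
    exact (mul_eq_zero.mp h').resolve_left ha
  have d2 : 2*I + b*V = 0 := by
    have h' : b * (2*I + b*V) = 0 := by linear_combination e2
    exact (mul_eq_zero.mp h').resolve_left hb
  have hab : a = b := by
    have h' : (a - b) * V = 0 := by linear_combination d1 - d2
    have := (mul_eq_zero.mp h').resolve_right hvn
    linarith
  exact hyz (by rw [hyx, hzx, hab])

lemma small_cover {α : Type*} (S : Set α)
    (hS : ∀ x y z, x ∈ S → y ∈ S → z ∈ S → x ≠ y → x ≠ z → y ≠ z → False)
    {a0 : α} (ha0 : a0 ∈ S) : ∃ a b, a ∈ S ∧ b ∈ S ∧ S ⊆ {a, b} := by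
  classical
  by_cases h : ∃ b ∈ S, b ≠ a0
  · obtain ⟨b, hb, hba⟩ := h
    refine ⟨a0, b, ha0, hb, ?_⟩
    intro z hzS
    by_contra hz
    simp only [Set.mem_insert_iff, Set.mem_singleton_iff] at hz
    push_neg at hz
    exact hS a0 b z ha0 hb hzS (Ne.symm hba) (Ne.symm hz.1) (Ne.symm hz.2)
  · push_neg at h
    exact ⟨a0, a0, ha0, ha0, fun z hz => by simp [h z hz]⟩




lemma sq_eq_of_sq_eq' {A B : ℝ} (h : A^2 = B^2) (hA : 0 ≤ A) (hB : 0 ≤ B) : A = B := by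
  nlinarith

lemma exists_cos_sin (α β : ℝ) (h : α^2 + β^2 = 1) :
    ∃ θ ∈ Set.Icc (-π) π, Real.cos θ = α ∧ Real.sin θ = β := by
  have hα1 : -1 ≤ α := by nlinarith [sq_nonneg β]
  have hα2 : α ≤ 1 := by nlinarith [sq_nonneg β]
  rcases le_or_gt 0 β with hβ | hβ
  · refine ⟨Real.arccos α, ⟨by linarith [Real.arccos_nonneg α, Real.pi_pos], Real.arccos_le_pi α⟩,
      Real.cos_arccos hα1 hα2, ?_⟩
    rw [Real.sin_arccos]
    rw [show 1 - α^2 = β^2 by linarith]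
    exact Real.sqrt_sq hβ
  · refine ⟨-Real.arccos α, ⟨by linarith [Real.arccos_le_pi α], by linarith [Real.arccos_nonneg α, Real.pi_pos]⟩, by rw [Real.cos_neg]; exact Real.cos_arccos hα1 hα2, ?_⟩
    rw [Real.sin_neg, Real.sin_arccos]
    rw [show 1 - α^2 = β^2 by linarith]
    rw [Real.sqrt_sq_eq_abs, abs_of_neg hβ]
    ring

lemma cos_sin_eq_int (θ θ' : ℝ) (hc : Real.cos θ = Real.cos θ') (hs : Real.sin θ = Real.sin θ') :
    ∃ k : ℤ, θ = θ' + 2*π*k := by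
  have h : Complex.exp (θ * Complex.I) = Complex.exp (θ' * Complex.I) := by
    rw [Complex.exp_mul_I, Complex.exp_mul_I]
    rw [show (θ:ℂ) = ((θ:ℝ):ℂ) from rfl, show (θ':ℂ) = ((θ':ℝ):ℂ) from rfl]
    rw [← Complex.ofReal_cos, ← Complex.ofReal_sin, hc, hs, Complex.ofReal_cos, Complex.ofReal_sin]
  obtain ⟨k, hk⟩ := Complex.exp_eq_exp_iff_exists_int.mp h
  refine ⟨k, ?_⟩
  have h2 : (θ:ℂ) * Complex.I = (θ' + 2*π*k : ℝ) * Complex.I := by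
    rw [hk]; push_cast; ring
  have h3 : (θ:ℂ) = ((θ' + 2*π*k : ℝ) : ℂ) :=
    mul_right_cancel₀ Complex.I_ne_zero h2
  exact_mod_cast h3

section core
variable (n e f : E) (c r : ℝ)

/-- circle parametrization -/
def circ (θ : ℝ) : E := c • n + (r * Real.cos θ) • e + (r * Real.sin θ) • f

lemma circ_props (hn : ‖n‖ = 1) (he : ‖e‖ = 1) (hf : ‖f‖ = 1)
    (hne : ⟪n, e⟫ = 0) (hnf : ⟪n, f⟫ = 0) (hef : ⟪e, f⟫ = 0)
    (hr : 0 < r) (hcr : c^2 + r^2 = 1) :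
    (∀ θ, ‖circ n e f c r θ‖ = 1) ∧ (∀ θ, ⟪n, circ n e f c r θ⟫ = c) ∧
    (∀ θ θ', dist (circ n e f c r θ) (circ n e f c r θ') ≤ r * |θ - θ'|) ∧
    (∀ θ θ', circ n e f c r θ = circ n e f c r θ' → ∃ k : ℤ, θ = θ' + 2*π*k) ∧
    (∀ X : E, ‖X‖ = 1 → ⟪n, X⟫ = c → ∃ θ ∈ Set.Icc (-π) π, X = circ n e f c r θ) := by
  have hen : ⟪e, n⟫ = 0 := by rw [real_inner_comm]; exact hne
  have hfn : ⟪f, n⟫ = 0 := by rw [real_inner_comm]; exact hnf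
  have hfe : ⟪f, e⟫ = 0 := by rw [real_inner_comm]; exact hef
  have hnn : ⟪n, n⟫ = (1:ℝ) := by rw [real_inner_self_eq_norm_sq, hn]; norm_num
  have hee : ⟪e, e⟫ = (1:ℝ) := by rw [real_inner_self_eq_norm_sq, he]; norm_num
  have hff : ⟪f, f⟫ = (1:ℝ) := by rw [real_inner_self_eq_norm_sq, hf]; norm_num
  have hinn : ∀ θ, ⟪n, circ n e f c r θ⟫ = c := by
    intro θ
    simp [circ, inner_add_right, inner_smul_right, hnn, hne, hnf, hn]
  have hinne : ∀ θ, ⟪e, circ n e f c r θ⟫ = r * Real.cos θ := by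
    intro θ
    simp [circ, inner_add_right, inner_smul_right, hen, hee, hef, he]
  have hinnf : ∀ θ, ⟪f, circ n e f c r θ⟫ = r * Real.sin θ := by
    intro θ
    simp [circ, inner_add_right, inner_smul_right, hfn, hfe, hff, hf]
  have hnorm : ∀ θ, ‖circ n e f c r θ‖ = 1 := by
    intro θ
    apply sq_eq_of_sq_eq' _ (norm_nonneg _) zero_le_one
    rw [← real_inner_self_eq_norm_sq]
    simp only [circ, inner_add_left, inner_add_right, inner_smul_left, inner_smul_right,
      hnn, hne, hnf, hen, hee, hef, hfn, hfe, hff, RCLike.ofReal_real_eq_id, id_eq,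
      starRingEnd_apply, star_trivial]
    nlinarith [Real.sin_sq_add_cos_sq θ]
  have hdist : ∀ θ θ', dist (circ n e f c r θ) (circ n e f c r θ') ≤ r * |θ - θ'| := by
    intro θ θ'
    have hsub : circ n e f c r θ - circ n e f c r θ'
        = (r * (Real.cos θ - Real.cos θ')) • e + (r * (Real.sin θ - Real.sin θ')) • f := by
      simp only [circ, smul_sub, sub_smul, mul_sub]
      abel
    have hsq : dist (circ n e f c r θ) (circ n e f c r θ')^2
        = r^2 * ((Real.cos θ - Real.cos θ')^2 + (Real.sin θ - Real.sin θ')^2) := by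
      rw [dist_eq_norm, hsub, norm_add_sq_real, inner_smul_left, inner_smul_right, norm_smul, norm_smul, hef]
      simp only [Real.norm_eq_abs, mul_pow, sq_abs, he, hf]
      ring
    have htrig : (Real.cos θ - Real.cos θ')^2 + (Real.sin θ - Real.sin θ')^2
        = 2 - 2 * Real.cos (θ - θ') := by
      rw [Real.cos_sub]
      nlinarith [Real.sin_sq_add_cos_sq θ, Real.sin_sq_add_cos_sq θ']
    have hbound : 2 - 2 * Real.cos (θ - θ') ≤ (θ - θ')^2 := by
      linarith [Real.one_sub_sq_div_two_le_cos (x := θ - θ')]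
    have h1 : dist (circ n e f c r θ) (circ n e f c r θ')^2 ≤ (r * |θ - θ'|)^2 := by
      rw [hsq, mul_pow, sq_abs, htrig]
      exact mul_le_mul_of_nonneg_left hbound (sq_nonneg r)
    nlinarith [dist_nonneg (x := circ n e f c r θ) (y := circ n e f c r θ'), h1,
      mul_nonneg hr.le (abs_nonneg (θ - θ'))]
  refine ⟨hnorm, hinn, hdist, ?_, ?_⟩
  · intro θ θ' hθ
    apply cos_sin_eq_int
    · have h1 := hinne θ
      rw [hθ, hinne θ'] at h1
      exact (mul_left_cancel₀ hr.ne' h1).symm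
    · have h1 := hinnf θ
      rw [hθ, hinnf θ'] at h1
      exact (mul_left_cancel₀ hr.ne' h1).symm
  · intro X hX hXc
    set v : E := X - c • n with hv
    have hvn : ⟪n, v⟫ = 0 := by
      rw [hv, inner_sub_right, inner_smul_right, hnn, hXc]; ring
    set α : ℝ := ⟪e, X⟫ with hα
    set β : ℝ := ⟪f, X⟫ with hβ
    have hve : ⟪e, v⟫ = α := by
      rw [hv, inner_sub_right, inner_smul_right, hen, hα]; ring
    have hvf : ⟪f, v⟫ = β := by
      rw [hv, inner_sub_right, inner_smul_right, hfn, hβ]; ring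
    -- v = α • e + β • f
    have hvdecomp : v = α • e + β • f := by
      set w : E := v - (α • e + β • f) with hw
      have hwn : ⟪n, w⟫ = 0 := by
        rw [hw, inner_sub_right, inner_add_right, inner_smul_right, inner_smul_right, hvn, hne, hnf]
        ring
      have hwe : ⟪e, w⟫ = 0 := by
        rw [hw, inner_sub_right, inner_add_right, inner_smul_right, inner_smul_right, hve, hee, hef]
        ring
      have hwf : ⟪f, w⟫ = 0 := by
        rw [hw, inner_sub_right, inner_add_right, inner_smul_right, inner_smul_right, hvf, hfe, hff]
        ring
      have horth : Orthonormal ℝ ![n, e, f] := by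
        constructor
        · intro i
          fin_cases i <;> simp [hn, he, hf]
        · intro i j hij
          fin_cases i <;> fin_cases j <;> simp_all [hne, hnf, hef, hen, hfn, hfe]
      have hcard : Fintype.card (Fin 3) = Module.finrank ℝ E := by
        simp [finrank_euclideanSpace_fin]
      have hspan : Submodule.span ℝ (Set.range ![n, e, f]) = ⊤ := by
        have := (basisOfLinearIndependentOfCardEqFinrank horth.linearIndependent hcard).span_eq
        rwa [coe_basisOfLinearIndependentOfCardEqFinrank] at this
      have hle : Submodule.span ℝ (Set.range ![n, e, f]) ≤ (Submodule.span ℝ {w})ᗮ := by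
        rw [Submodule.span_le]
        rintro x ⟨i, rfl⟩
        rw [SetLike.mem_coe, Submodule.mem_orthogonal_singleton_iff_inner_right]
        fin_cases i
        · rw [real_inner_comm]; exact hwn
        · rw [real_inner_comm]; exact hwe
        · rw [real_inner_comm]; exact hwf
      have hwbot : w = 0 := by
        have htop : (Submodule.span ℝ {w})ᗮ = ⊤ := top_le_iff.mp (hspan ▸ hle)
        have : Submodule.span ℝ {w} ≤ ⊥ := by
          rw [← Submodule.top_orthogonal_eq_bot, ← htop, Submodule.orthogonal_orthogonal]
        simpa using this (Submodule.mem_span_singleton_self w)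
      have : v - (α • e + β • f) = 0 := hwbot
      rw [sub_eq_zero] at this
      exact this
    have hαβ : (α/r)^2 + (β/r)^2 = 1 := by
      have hnv : ‖v‖^2 = α^2 + β^2 := by
        rw [hvdecomp, norm_add_sq_real, inner_smul_left, inner_smul_right, norm_smul, norm_smul, hef]
        simp only [Real.norm_eq_abs, mul_pow, sq_abs, he, hf]
        ring
      have hnv2 : ‖v‖^2 = r^2 := by
        rw [hv, norm_sub_sq_real, inner_smul_right, norm_smul, real_inner_comm n X, hXc, hX, hn]
        simp only [Real.norm_eq_abs, mul_pow, sq_abs, mul_one, one_pow]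
        nlinarith [hcr]
      have hr2 : r^2 ≠ 0 := pow_ne_zero 2 hr.ne'
      field_simp
      nlinarith [hnv, hnv2]
    obtain ⟨θ, hθmem, hθc, hθs⟩ := exists_cos_sin (α/r) (β/r) hαβ
    refine ⟨θ, hθmem, ?_⟩
    rw [circ, hθc, hθs]
    have : X = c • n + v := by rw [hv]; abel
    rw [this, hvdecomp]
    rw [mul_div_cancel₀ _ hr.ne', mul_div_cancel₀ _ hr.ne']
    abel


lemma circle_log_core (n e f : E) (c r : ℝ) (hn : ‖n‖ = 1) (he : ‖e‖ = 1) (hf : ‖f‖ = 1)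
    (hne : ⟪n, e⟫ = 0) (hnf : ⟪n, f⟫ = 0) (hef : ⟪e, f⟫ = 0)
    (hr : 0 < r) (hcr : c^2 + r^2 = 1) (θp θq : ℝ) (hlt : θp < θq) (hgap : θq < θp + 2*π)
    (hpq : circ n e f c r θp ≠ circ n e f c r θq) (y : ℝ) :
    ∃ X : E, ‖X‖ = 1 ∧ ⟪n, X⟫ = c ∧ X ≠ circ n e f c r θp ∧ X ≠ circ n e f c r θq ∧
      Real.log (dist X (circ n e f c r θq)) - Real.log (dist X (circ n e f c r θp)) = y := by
  obtain ⟨hnorm, hinn, hdist, hinj, -⟩ := circ_props n e f c r hn he hf hne hnf hef hr hcr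
  set γ := circ n e f c r with hγ
  set dpq : ℝ := dist (γ θp) (γ θq) with hdpq
  have hdpq0 : 0 < dpq := dist_pos.mpr hpq
  have hne_mid : ∀ θ, θp < θ → θ < θq → γ θ ≠ γ θp ∧ γ θ ≠ γ θq := by
    intro θ h1 h2
    constructor
    · intro hcontra
      obtain ⟨k, hk⟩ := hinj θ θp hcontra
      have hk0 : (0:ℝ) < 2*π*k := by linarith
      have hk1 : 2*π*(k:ℝ) < 2*π := by linarith
      have hk0' : (0:Int) < k := by
        by_contra hneg
        push_neg at hneg
        have : (k:ℝ) ≤ 0 := by exact_mod_cast hneg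
        nlinarith [Real.pi_pos]
      have hk1' : (k:Int) < 1 := by
        by_contra hge
        push_neg at hge
        have : (1:ℝ) ≤ (k:ℝ) := by exact_mod_cast hge
        nlinarith [Real.pi_pos]
      omega
    · intro hcontra
      obtain ⟨k, hk⟩ := hinj θ θq hcontra
      have hk0 : 2*π*(k:ℝ) < 0 := by linarith
      have hk1 : -(2*π) < 2*π*(k:ℝ) := by linarith
      have hk0' : k < (0:Int) := by
        by_contra hneg
        push_neg at hneg
        have : (0:ℝ) ≤ (k:ℝ) := by exact_mod_cast hneg
        nlinarith [Real.pi_pos]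
      have hk1' : (-1:Int) < k := by
        by_contra hge
        push_neg at hge
        have : (k:ℝ) ≤ (-1:ℝ) := by exact_mod_cast hge
        nlinarith [Real.pi_pos]
      omega
  set g : ℝ → ℝ := fun θ => Real.log (dist (γ θ) (γ θq)) - Real.log (dist (γ θ) (γ θp))
    with hg
  -- value bounds
  have main : ∀ z : ℝ, ∀ θ : ℝ, θ = θp + min ((θq - θp)/2) (dpq/2 * min 1 (Real.exp (-z)) / r) →
      θp < θ ∧ θ < θq ∧ z ≤ g θ := by
    intro z θ hθ
    set ε : ℝ := min ((θq - θp)/2) (dpq/2 * min 1 (Real.exp (-z)) / r) with hε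
    have hmin1 : 0 < min 1 (Real.exp (-z)) := lt_min one_pos (Real.exp_pos _)
    have hε0 : 0 < ε := lt_min (by linarith) (by positivity)
    have hεhalf : ε ≤ (θq - θp)/2 := min_le_left _ _
    have hθ1 : θp < θ := by rw [hθ]; linarith
    have hθ2 : θ < θq := by rw [hθ]; linarith
    have hrε : r * ε ≤ dpq/2 * min 1 (Real.exp (-z)) := by
      have h1 : ε ≤ dpq/2 * min 1 (Real.exp (-z)) / r := min_le_right _ _
      calc r * ε ≤ r * (dpq/2 * min 1 (Real.exp (-z)) / r) := by
            exact mul_le_mul_of_nonneg_left h1 hr.le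
        _ = dpq/2 * min 1 (Real.exp (-z)) := by field_simp
    have hrε1 : r * ε ≤ dpq/2 := by
      calc r * ε ≤ dpq/2 * min 1 (Real.exp (-z)) := hrε
        _ ≤ dpq/2 * 1 := by
            exact mul_le_mul_of_nonneg_left (min_le_left _ _) (by linarith)
        _ = dpq/2 := by ring
    have hrε2 : r * ε ≤ dpq/2 * Real.exp (-z) := by
      calc r * ε ≤ dpq/2 * min 1 (Real.exp (-z)) := hrε
        _ ≤ dpq/2 * Real.exp (-z) := by
            exact mul_le_mul_of_nonneg_left (min_le_right _ _) (by linarith)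
    obtain ⟨hnep, hneq⟩ := hne_mid θ hθ1 hθ2
    have hdp : dist (γ θ) (γ θp) ≤ r * ε := by
      have := hdist θ θp
      rw [hθ] at this ⊢
      rw [show θp + ε - θp = ε by ring, abs_of_pos hε0] at this
      exact this
    have hdp0 : 0 < dist (γ θ) (γ θp) := dist_pos.mpr hnep
    have hdq : dpq/2 ≤ dist (γ θ) (γ θq) := by
      have htri := dist_triangle (γ θp) (γ θ) (γ θq)
      have : dist (γ θp) (γ θ) ≤ r * ε := by rw [dist_comm]; exact hdp
      linarith [htri, hrε1]
    refine ⟨hθ1, hθ2, ?_⟩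
    rw [hg]
    have l1 : Real.log (dpq/2) ≤ Real.log (dist (γ θ) (γ θq)) :=
      Real.log_le_log (by linarith) hdq
    have l2 : Real.log (dist (γ θ) (γ θp)) ≤ Real.log (dpq/2 * Real.exp (-z)) :=
      Real.log_le_log hdp0 (le_trans hdp hrε2)
    rw [Real.log_mul (by positivity) (Real.exp_ne_zero _), Real.log_exp] at l2
    simp only
    linarith
  have main2 : ∀ z : ℝ, ∀ θ : ℝ, θ = θq - min ((θq - θp)/2) (dpq/2 * min 1 (Real.exp z) / r) →
      θp < θ ∧ θ < θq ∧ g θ ≤ z := by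
    intro z θ hθ
    set ε : ℝ := min ((θq - θp)/2) (dpq/2 * min 1 (Real.exp z) / r) with hε
    have hmin1 : 0 < min 1 (Real.exp z) := lt_min one_pos (Real.exp_pos _)
    have hε0 : 0 < ε := lt_min (by linarith) (by positivity)
    have hεhalf : ε ≤ (θq - θp)/2 := min_le_left _ _
    have hθ1 : θp < θ := by rw [hθ]; linarith
    have hθ2 : θ < θq := by rw [hθ]; linarith
    have hrε : r * ε ≤ dpq/2 * min 1 (Real.exp z) := by
      have h1 : ε ≤ dpq/2 * min 1 (Real.exp z) / r := min_le_right _ _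
      calc r * ε ≤ r * (dpq/2 * min 1 (Real.exp z) / r) := by
            exact mul_le_mul_of_nonneg_left h1 hr.le
        _ = dpq/2 * min 1 (Real.exp z) := by field_simp
    have hrε1 : r * ε ≤ dpq/2 := by
      calc r * ε ≤ dpq/2 * min 1 (Real.exp z) := hrε
        _ ≤ dpq/2 * 1 := by
            exact mul_le_mul_of_nonneg_left (min_le_left _ _) (by linarith)
        _ = dpq/2 := by ring
    have hrε2 : r * ε ≤ dpq/2 * Real.exp z := by
      calc r * ε ≤ dpq/2 * min 1 (Real.exp z) := hrε
        _ ≤ dpq/2 * Real.exp z := by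
            exact mul_le_mul_of_nonneg_left (min_le_right _ _) (by linarith)
    obtain ⟨hnep, hneq⟩ := hne_mid θ hθ1 hθ2
    have hdq' : dist (γ θ) (γ θq) ≤ r * ε := by
      have := hdist θ θq
      rw [hθ] at this ⊢
      rw [show θq - ε - θq = -ε by ring, abs_neg, abs_of_pos hε0] at this
      exact this
    have hdq0 : 0 < dist (γ θ) (γ θq) := dist_pos.mpr hneq
    have hdp' : dpq/2 ≤ dist (γ θ) (γ θp) := by
      have htri := dist_triangle (γ θp) (γ θ) (γ θq)
      have hcomm : dist (γ θ) (γ θp) = dist (γ θp) (γ θ) := dist_comm _ _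
      linarith [htri, hrε1, hcomm]
    refine ⟨hθ1, hθ2, ?_⟩
    rw [hg]
    have l1 : Real.log (dist (γ θ) (γ θq)) ≤ Real.log (dpq/2 * Real.exp z) :=
      Real.log_le_log hdq0 (le_trans hdq' hrε2)
    have l2 : Real.log (dpq/2) ≤ Real.log (dist (γ θ) (γ θp)) :=
      Real.log_le_log (by linarith) hdp'
    rw [Real.log_mul (by positivity) (Real.exp_ne_zero _), Real.log_exp] at l1
    simp only
    linarith
  obtain ⟨hθ11, hθ12, hv1⟩ := main y _ rfl
  obtain ⟨hθ21, hθ22, hv2⟩ := main2 y _ rfl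
  set θ₁ : ℝ := θp + min ((θq - θp)/2) (dpq/2 * min 1 (Real.exp (-y)) / r) with hθ₁def
  set θ₂ : ℝ := θq - min ((θq - θp)/2) (dpq/2 * min 1 (Real.exp y) / r) with hθ₂def
  have hθ₁₂ : θ₁ ≤ θ₂ := by
    have h1 : θ₁ ≤ θp + (θq - θp)/2 := by
      rw [hθ₁def]; exact add_le_add (le_refl _) (min_le_left _ _)
    have h2 : θq - (θq - θp)/2 ≤ θ₂ := by
      rw [hθ₂def]; exact sub_le_sub_left (min_le_left _ _) _
    have heq : θp + (θq - θp)/2 = θq - (θq - θp)/2 := by ring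
    calc θ₁ ≤ θp + (θq - θp)/2 := h1
      _ = θq - (θq - θp)/2 := heq
      _ ≤ θ₂ := h2
  have hcont : ContinuousOn g (Set.uIcc θ₁ θ₂) := by
    intro θ hθ
    rw [Set.uIcc_of_le hθ₁₂] at hθ
    have hθp' : θp < θ := lt_of_lt_of_le hθ11 hθ.1
    have hθq' : θ < θq := lt_of_le_of_lt hθ.2 hθ22
    obtain ⟨hnep, hneq⟩ := hne_mid θ hθp' hθq'
    have hγc : Continuous γ := by
      rw [hγ]
      unfold circ
      fun_prop
    have d1 : ContinuousAt (fun θ => dist (γ θ) (γ θq)) θ :=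
      (hγc.dist continuous_const).continuousAt
    have d2 : ContinuousAt (fun θ => dist (γ θ) (γ θp)) θ :=
      (hγc.dist continuous_const).continuousAt
    have c1 : ContinuousAt (fun θ => Real.log (dist (γ θ) (γ θq))) θ :=
      ContinuousAt.comp (g := Real.log) (Real.continuousAt_log (ne_of_gt (dist_pos.mpr hneq))) d1
    have c2 : ContinuousAt (fun θ => Real.log (dist (γ θ) (γ θp))) θ :=
      ContinuousAt.comp (g := Real.log) (Real.continuousAt_log (ne_of_gt (dist_pos.mpr hnep))) d2
    exact (c1.sub c2).continuousWithinAt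
  have hy_mem : y ∈ Set.uIcc (g θ₁) (g θ₂) := Set.mem_uIcc.mpr (Or.inr ⟨hv2, hv1⟩)
  obtain ⟨θs, hθs_mem, hθs⟩ := intermediate_value_uIcc hcont hy_mem
  rw [Set.uIcc_of_le hθ₁₂] at hθs_mem
  have hθsp : θp < θs := lt_of_lt_of_le hθ11 hθs_mem.1
  have hθsq : θs < θq := lt_of_le_of_lt hθs_mem.2 hθ22
  obtain ⟨hnep, hneq⟩ := hne_mid θs hθsp hθsq
  exact ⟨γ θs, hnorm θs, hinn θs, hnep, hneq, hθs⟩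


end core

lemma circ_two_pi (n e f : E) (c r : ℝ) (θ : ℝ) :
    circ n e f c r (θ + 2*π) = circ n e f c r θ := by
  unfold circ
  rw [Real.cos_add_two_pi, Real.sin_add_two_pi]

lemma circle_log_surj (n : E) (c : ℝ) (hn : ‖n‖ = 1) (hc : |c| < 1) (p q : E)
    (hpS : ‖p‖ = 1) (hpA : ⟪n, p⟫ = c) (hqS : ‖q‖ = 1) (hqA : ⟪n, q⟫ = c) (hpq : p ≠ q)
    (y : ℝ) :
    ∃ X : E, ‖X‖ = 1 ∧ ⟪n, X⟫ = c ∧ X ≠ p ∧ X ≠ q ∧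
      Real.log (dist X q) - Real.log (dist X p) = y := by
  have hn0 : n ≠ 0 := by
    intro h; rw [h] at hn; simp at hn
  set D : Submodule ℝ E := (Submodule.span ℝ {n})ᗮ with hD
  have hDdim : Module.finrank ℝ ↥D = 2 := by
    have h1 := Submodule.finrank_add_finrank_orthogonal (K := Submodule.span ℝ {n})
    rw [finrank_span_singleton hn0, finrank_euclideanSpace_fin, ← hD] at h1
    omega
  set B := (stdOrthonormalBasis ℝ ↥D).reindex (finCongr hDdim) with hB
  set e : E := ↑(B 0) with he'
  set f : E := ↑(B 1) with hf'
  have he : ‖e‖ = 1 := by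
    rw [he']; exact B.orthonormal.1 0
  have hf : ‖f‖ = 1 := by
    rw [hf']; exact B.orthonormal.1 1
  have hef : ⟪e, f⟫ = 0 := by
    rw [he', hf', ← Submodule.coe_inner]
    exact B.orthonormal.2 (by decide : (0 : Fin 2) ≠ 1)
  have hne : ⟪n, e⟫ = 0 := by
    have hmem : e ∈ D := (B 0).2
    rw [hD] at hmem
    exact Submodule.mem_orthogonal_singleton_iff_inner_right.mp hmem
  have hnf : ⟪n, f⟫ = 0 := by
    have hmem : f ∈ D := (B 1).2
    rw [hD] at hmem
    exact Submodule.mem_orthogonal_singleton_iff_inner_right.mp hmem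
  have hc2 : c^2 < 1 := by
    rw [sq_lt_one_iff_abs_lt_one]; exact hc
  set r : ℝ := Real.sqrt (1 - c^2) with hr'
  have hr : 0 < r := Real.sqrt_pos.mpr (by linarith)
  have hcr : c^2 + r^2 = 1 := by
    rw [hr', Real.sq_sqrt (by linarith)]; ring
  obtain ⟨-, -, -, -, hparam⟩ := circ_props n e f c r hn he hf hne hnf hef hr hcr
  obtain ⟨θp, hθpI, hθp⟩ := hparam p hpS hpA
  obtain ⟨θq, hθqI, hθq⟩ := hparam q hqS hqA
  have hθne : θp ≠ θq := by
    intro h; apply hpq; rw [hθp, hθq, h]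
  rcases lt_or_gt_of_ne hθne with hlt | hgt
  · have hgap : θq < θp + 2*π := by
      by_contra hge
      push_neg at hge
      have : θq = θp + 2*π := by
        have := hθpI.1; have := hθqI.2
        have hpi := Real.pi_pos
        linarith [hθpI.1, hθqI.2]
      apply hpq
      rw [hθp, hθq, this, circ_two_pi]
    have hpq' : circ n e f c r θp ≠ circ n e f c r θq := by
      rw [← hθp, ← hθq]; exact hpq
    obtain ⟨X, h1, h2, h3, h4, h5⟩ :=
      circle_log_core n e f c r hn he hf hne hnf hef hr hcr θp θq hlt hgap hpq' y
    exact ⟨X, h1, h2, by rwa [← hθp] at h3, by rwa [← hθq] at h4,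
      by rwa [← hθp, ← hθq] at h5⟩
  · have hgap : θp < θq + 2*π := by
      by_contra hge
      push_neg at hge
      have : θp = θq + 2*π := by
        linarith [hθqI.1, hθpI.2]
      apply hpq
      rw [hθp, hθq, this, circ_two_pi]
    have hpq' : circ n e f c r θq ≠ circ n e f c r θp := by
      rw [← hθp, ← hθq]; exact hpq.symm
    obtain ⟨X, h1, h2, h3, h4, h5⟩ :=
      circle_log_core n e f c r hn he hf hne hnf hef hr hcr θq θp hgt hgap hpq' (-y)
    refine ⟨X, h1, h2, by rwa [← hθp] at h4, by rwa [← hθq] at h3, ?_⟩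
    rw [← hθp, ← hθq] at h5
    linarith [h5]



lemma inv3_halfplane (p z : E) (hp : ‖p‖ = 1) (hz : ‖z‖ = 1) (hzp : z ≠ p) :
    ⟪p, inv3 p z⟫ = 1/2 := by
  have hzpn : ‖z - p‖ ≠ 0 := by simpa [sub_eq_zero] using hzp
  have hnorm : ‖z - p‖^2 = 2 - 2*⟪p, z⟫ := by
    rw [norm_sub_sq_real, hz, hp, real_inner_comm p z]; ring
  have ht : (2 : ℝ) - 2*⟪p, z⟫ ≠ 0 := by
    rw [← hnorm]; exact pow_ne_zero 2 hzpn
  set t : ℝ := ⟪p, z⟫ with htdef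
  rw [inv3, inner_add_right, inner_smul_right, inner_sub_right, real_inner_self_eq_norm_sq, hp,
    hnorm]
  rw [← htdef]
  have ht1 : (1:ℝ) - t ≠ 0 := by intro h; apply ht; linarith
  field_simp
  ring

lemma inv3_plane (p z nPl : E) (cPl : ℝ) (hp : ⟪nPl, p⟫ = cPl) (hz : ⟪nPl, z⟫ = cPl)
    (hzp : z ≠ p) : ⟪nPl, inv3 p z⟫ = cPl := by
  rw [inv3, inner_add_right, inner_smul_right, inner_sub_right, hp, hz]
  ring

/-- The key geometric identity. -/
lemma key_power (p q a b u v : E)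
    (hpS : ‖p‖ = 1) (hqS : ‖q‖ = 1) (haS : ‖a‖ = 1) (hbS : ‖b‖ = 1)
    (huS : ‖u‖ = 1) (hvS : ‖v‖ = 1)
    (n₁ : E) (c₁ : ℝ) (hn₁ : ‖n₁‖ = 1) (hc₁ : |c₁| < 1)
    (hp₁ : ⟪n₁, p⟫ = c₁) (hq₁ : ⟪n₁, q⟫ = c₁) (ha₁ : ⟪n₁, a⟫ = c₁) (hb₁ : ⟪n₁, b⟫ = c₁)
    (n₂ : E) (c₂ : ℝ) (hn₂ : ‖n₂‖ = 1) (hc₂ : |c₂| < 1)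
    (hp₂ : ⟪n₂, p⟫ = c₂) (hq₂ : ⟪n₂, q⟫ = c₂) (hu₂ : ⟪n₂, u⟫ = c₂) (hv₂ : ⟪n₂, v⟫ = c₂)
    (nA : E) (cA : ℝ) (hnA : ‖nA‖ = 1) (hcA : |cA| < 1)
    (haA : ⟪nA, a⟫ = cA) (hbA : ⟪nA, b⟫ = cA) (huA : ⟪nA, u⟫ = cA) (hvA : ⟪nA, v⟫ = cA)
    (hpA : ⟪nA, p⟫ ≠ cA) (hqA : ⟪nA, q⟫ ≠ cA)
    (hab : a ≠ b) (huv : u ≠ v)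
    (hap : a ≠ p) (haq : a ≠ q) (hbp : b ≠ p) (hbq : b ≠ q)
    (hup : u ≠ p) (huq : u ≠ q) (hvp : v ≠ p) (hvq : v ≠ q) (hqp : q ≠ p) :
    (Real.log (dist a q) - Real.log (dist a p)) + (Real.log (dist b q) - Real.log (dist b p))
    = (Real.log (dist u q) - Real.log (dist u p))
      + (Real.log (dist v q) - Real.log (dist v p)) := by
  classical
  -- the sphere through the circle S² ∩ A, avoiding p
  set R : ℝ := Real.sqrt (2 - 2*cA) with hR
  have hsph : ∀ z : E, ‖z‖ = 1 → ⟪nA, z⟫ = cA → ‖z - nA‖ = R := by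
    intro z h1 h2
    rw [hR]
    have : ‖z - nA‖^2 = 2 - 2*cA := by
      rw [norm_sub_sq_real, h1, hnA, real_inner_comm nA z, h2]; ring
    rw [← this, Real.sqrt_sq (norm_nonneg _)]
  set D : ℝ := ‖nA - p‖^2 - R^2 with hD
  have hRsq : R^2 = 2 - 2*cA := by
    rw [hR, Real.sq_sqrt]
    rcases abs_lt.mp hcA with ⟨h1, h2⟩
    linarith
  have hD0 : D ≠ 0 := by
    rw [hD, hRsq, norm_sub_sq_real, hnA, hpS]
    intro h
    apply hpA
    nlinarith [h]
  set ι : E → E := inv3 p with hι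
  set o' : E := p + D⁻¹ • (nA - p) with ho'
  -- cosphericity of the four inverted points
  have hcosph : Cospherical ({ι a, ι b, ι u, ι v} : Set E) := by
    refine ⟨o', R/|D|, ?_⟩
    intro z hzmem
    simp only [Set.mem_insert_iff, Set.mem_singleton_iff] at hzmem
    rcases hzmem with rfl|rfl|rfl|rfl
    · exact inv3_sphere p nA a R (hsph a haS haA) hap hD0
    · exact inv3_sphere p nA b R (hsph b hbS hbA) hbp hD0
    · exact inv3_sphere p nA u R (hsph u huS huA) hup hD0
    · exact inv3_sphere p nA v R (hsph v hvS hvA) hvp hD0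
  -- distances between inverted points
  have hdab : ∀ z w : E, z ≠ p → w ≠ p → dist (ι z) (ι w) = dist z w / (dist z p * dist w p) :=
    fun z w hz hw => inv3_dist p z w hz hw
  have hιne : ∀ z w : E, z ≠ p → w ≠ p → z ≠ w → ι z ≠ ι w := by
    intro z w hz hw hzw
    intro hcon
    have := hdab z w hz hw
    rw [hcon] at this
    simp only [dist_self] at this
    have h1 : dist z w ≠ 0 := dist_ne_zero.mpr hzw
    have h2 : dist z p ≠ 0 := dist_ne_zero.mpr hz
    have h3 : dist w p ≠ 0 := dist_ne_zero.mpr hw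
    rw [eq_comm, div_eq_zero_iff] at this
    rcases this with h|h
    · exact h1 h
    · exact (mul_ne_zero h2 h3) h
  -- collinearity on each inverted circle-line
  have hindep₁ : ¬ ∃ t : ℝ, p = t • n₁ := by
    rintro ⟨t, ht⟩
    have h1 : ⟪n₁, p⟫ = t := by
      rw [ht, inner_smul_right, real_inner_self_eq_norm_sq, hn₁]; ring
    have h2 : ‖p‖ = |t| := by rw [ht, norm_smul, hn₁, Real.norm_eq_abs]; ring
    rw [hpS] at h2
    rw [hp₁] at h1
    rw [h1] at hc₁
    rw [← h2] at hc₁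
    exact lt_irrefl _ hc₁
  have hindep₂ : ¬ ∃ t : ℝ, p = t • n₂ := by
    rintro ⟨t, ht⟩
    have h1 : ⟪n₂, p⟫ = t := by
      rw [ht, inner_smul_right, real_inner_self_eq_norm_sq, hn₂]; ring
    have h2 : ‖p‖ = |t| := by rw [ht, norm_smul, hn₂, Real.norm_eq_abs]; ring
    rw [hpS] at h2
    rw [hp₂] at h1
    rw [h1] at hc₂
    rw [← h2] at hc₂
    exact lt_irrefl _ hc₂
  have hn₁0 : n₁ ≠ 0 := by intro h; rw [h] at hn₁; simp at hn₁
  have hn₂0 : n₂ ≠ 0 := by intro h; rw [h] at hn₂; simp at hn₂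
  -- line scaling facts
  have hline : ∀ (nP : E) (cP : ℝ), nP ≠ 0 → (¬ ∃ t : ℝ, p = t • nP) →
      ⟪nP, p⟫ = cP → ∀ z w : E, ‖z‖ = 1 → ‖w‖ = 1 → z ≠ p → w ≠ p → z ≠ w → z ≠ q → w ≠ q →
      ⟪nP, z⟫ = cP → ⟪nP, w⟫ = cP → ⟪nP, q⟫ = cP →
      ∃ k : ℝ, k ≠ 1 ∧ ι w -ᵥ ι q = k • (ι z -ᵥ ι q) := by
    intro nP cP hnP0 hindep hpP z w hzS hwS hz hw hzw hzq hwq hzP hwP hqP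
    have hz' : ⟪nP, ι z - ι q⟫ = 0 := by
      rw [inner_sub_right, inv3_plane p z nP cP hpP hzP hz, inv3_plane p q nP cP hpP hqP hqp]
      ring
    have hw' : ⟪nP, ι w - ι q⟫ = 0 := by
      rw [inner_sub_right, inv3_plane p w nP cP hpP hwP hw, inv3_plane p q nP cP hpP hqP hqp]
      ring
    have hz'' : ⟪p, ι z - ι q⟫ = 0 := by
      rw [inner_sub_right, inv3_halfplane p z hpS hzS hz,
        inv3_halfplane p q hpS hqS hqp]
      ring
    have hw'' : ⟪p, ι w - ι q⟫ = 0 := by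
      rw [inner_sub_right, inv3_halfplane p w hpS hwS hw,
        inv3_halfplane p q hpS hqS hqp]
      ring
    obtain ⟨vv, ⟨k₁, hk₁⟩, ⟨k₂, hk₂⟩⟩ :=
      orth_pair_parallel nP p hnP0 hindep (ι z - ι q) (ι w - ι q) hz' hz'' hw' hw''
    have hk₁0 : k₁ ≠ 0 := by
      rintro rfl
      rw [zero_smul, sub_eq_zero] at hk₁
      exact hιne z q hz hqp hzq hk₁
    refine ⟨k₂ / k₁, ?_, ?_⟩
    · intro hcon
      have : ι w - ι q = ι z - ι q := by
        rw [hk₁, hk₂]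
        rw [div_eq_one_iff_eq hk₁0] at hcon
        rw [hcon]
      rw [sub_left_inj] at this
      exact hιne z w hz hw hzw this.symm
    · rw [vsub_eq_sub, vsub_eq_sub, hk₁, hk₂, smul_smul]
      congr 1
      field_simp
  obtain ⟨ka, hka1, hka⟩ := hline n₁ c₁ hn₁0 hindep₁ hp₁ a b haS hbS hap hbp hab haq hbq ha₁ hb₁ hq₁
  obtain ⟨ku, hku1, hku⟩ := hline n₂ c₂ hn₂0 hindep₂ hp₂ u v huS hvS hup hvp huv huq hvq hu₂ hv₂ hq₂
  have hmemL : ∀ (x y z : E) (k : ℝ), k ≠ 1 → y -ᵥ z = k • (x -ᵥ z) → z ∈ line[ℝ, x, y] := by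
    intro x y z k hk h
    have hk' : k - 1 ≠ 0 := sub_ne_zero.mpr hk
    have hyx : y - x = (k-1) • (x - z) := by
      rw [vsub_eq_sub, vsub_eq_sub] at h
      rw [sub_smul, one_smul, ← h]; abel
    have : z = AffineMap.lineMap x y (-(k-1)⁻¹) := by
      rw [AffineMap.lineMap_apply, vsub_eq_sub, hyx, smul_smul, neg_mul, inv_mul_cancel₀ hk',
        vadd_eq_add, neg_one_smul, neg_sub, sub_add_cancel]
    rw [this]; exact AffineMap.lineMap_mem_affineSpan_pair _ _ _
  have hpow := EuclideanGeometry.mul_dist_eq_mul_dist_of_cospherical hcosph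
    (hmemL _ _ _ ka hka1 hka) (hmemL _ _ _ ku hku1 hku)
  -- translate back
  rw [hdab a q hap hqp, hdab b q hbp hqp, hdab u q hup hqp, hdab v q hvp hqp] at hpow
  have naq : dist a q ≠ 0 := dist_ne_zero.mpr haq
  have nbq : dist b q ≠ 0 := dist_ne_zero.mpr hbq
  have nuq : dist u q ≠ 0 := dist_ne_zero.mpr huq
  have nvq : dist v q ≠ 0 := dist_ne_zero.mpr hvq
  have nap : dist a p ≠ 0 := dist_ne_zero.mpr hap
  have nbp : dist b p ≠ 0 := dist_ne_zero.mpr hbp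
  have nup : dist u p ≠ 0 := dist_ne_zero.mpr hup
  have nvp : dist v p ≠ 0 := dist_ne_zero.mpr hvp
  have nqp : dist q p ≠ 0 := dist_ne_zero.mpr hqp
  have l1 := congrArg Real.log hpow
  rw [Real.log_mul (div_ne_zero naq (mul_ne_zero nap nqp)) (div_ne_zero nbq (mul_ne_zero nbp nqp)),
    Real.log_mul (div_ne_zero nuq (mul_ne_zero nup nqp)) (div_ne_zero nvq (mul_ne_zero nvp nqp)),
    Real.log_div naq (mul_ne_zero nap nqp), Real.log_div nbq (mul_ne_zero nbp nqp),
    Real.log_div nuq (mul_ne_zero nup nqp), Real.log_div nvq (mul_ne_zero nvp nqp),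
    Real.log_mul nap nqp, Real.log_mul nbp nqp, Real.log_mul nup nqp, Real.log_mul nvp nqp] at l1
  linarith [l1]


lemma half_ne_int (k : ℤ) (h : (k:ℝ) = 1/2) : False := by
  have h2 : (2*k : ℝ) = 1 := by push_cast; linarith
  have h3 : (2*k : ℤ) = 1 := by exact_mod_cast h2
  omega

lemma card3 (s : Set (Fin 5)) (x y z : Fin 5) (h : s ⊆ {x, y, z}) : s.ncard ≤ 3 := by
  have h1 : s.ncard ≤ ({x, y, z} : Set (Fin 5)).ncard := Set.ncard_le_ncard h (Set.toFinite _)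
  have h2 : ({x, y, z} : Set (Fin 5)).ncard ≤ 3 := by
    have i1 := Set.ncard_insert_le x ({y, z} : Set (Fin 5))
    have i2 := Set.ncard_insert_le y ({z} : Set (Fin 5))
    have i3 : ({z} : Set (Fin 5)).ncard = 1 := Set.ncard_singleton z
    omega
  exact le_trans h1 h2

lemma no_bad (La Lb Lu Lv : ℝ) (hsum : La + Lb = Lu + Lv) (ca cb cu cv : Fin 5)
    (ha : (ca = 0 ∧ ∃ m : ℤ, La = m) ∨ (ca = 1 ∧ ∃ m : ℤ, La = m + 1/2) ∨
      (ca = 2 ∧ ¬(∃ m : ℤ, La = m) ∧ ¬(∃ m : ℤ, La = m + 1/2)))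
    (hb : (cb = 0 ∧ ∃ m : ℤ, Lb = m) ∨ (cb = 1 ∧ ∃ m : ℤ, Lb = m + 1/2) ∨
      (cb = 2 ∧ ¬(∃ m : ℤ, Lb = m) ∧ ¬(∃ m : ℤ, Lb = m + 1/2)))
    (hu : (cu = 3 ∧ ∃ m : ℤ, Lu = m + 1/4) ∨ (cu = 4 ∧ ∃ m : ℤ, Lu = m + 3/4) ∨
      (cu = 2 ∧ ¬(∃ m : ℤ, Lu = m + 1/4) ∧ ¬(∃ m : ℤ, Lu = m + 3/4)))
    (hv : (cv = 3 ∧ ∃ m : ℤ, Lv = m + 1/4) ∨ (cv = 4 ∧ ∃ m : ℤ, Lv = m + 3/4) ∨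
      (cv = 2 ∧ ¬(∃ m : ℤ, Lv = m + 1/4) ∧ ¬(∃ m : ℤ, Lv = m + 3/4)))
    (hab : ca ≠ cb) (huv : cu ≠ cv) (hau : ca ≠ cu) (hav : ca ≠ cv)
    (hbu : cb ≠ cu) (hbv : cb ≠ cv) : False := by
  -- left side: either a sum representation, or one point is "2" and the other explicit
  rcases ha with ⟨hca, m1, e1⟩ | ⟨hca, m1, e1⟩ | ⟨hca, hna0, hna1⟩ <;>
    rcases hb with ⟨hcb, m2, e2⟩ | ⟨hcb, m2, e2⟩ | ⟨hcb, hnb0, hnb1⟩ <;>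
      rcases hu with ⟨hcu, m3, e3⟩ | ⟨hcu, m3, e3⟩ | ⟨hcu, hnu3, hnu4⟩ <;>
        rcases hv with ⟨hcv, m4, e4⟩ | ⟨hcv, m4, e4⟩ | ⟨hcv, hnv3, hnv4⟩ <;>
          subst hca <;> subst hcb <;> subst hcu <;> subst hcv <;>
    first
      | exact hab rfl
      | exact huv rfl
      | exact hau rfl
      | exact hav rfl
      | exact hbu rfl
      | exact hbv rfl
      | exact half_ne_int (m3 + m4 + 1 - m1 - m2) (by push_cast; linarith)
      | exact hnb0 ⟨m3 + m4 + 1 - m1, by push_cast; linarith⟩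
      | exact hnb1 ⟨m3 + m4 - m1, by push_cast; linarith⟩
      | exact hna0 ⟨m3 + m4 + 1 - m2, by push_cast; linarith⟩
      | exact hna1 ⟨m3 + m4 - m2, by push_cast; linarith⟩
      | exact hnv3 ⟨m1 + m2 - m3, by push_cast; linarith⟩
      | exact hnv4 ⟨m1 + m2 - m3 - 1, by push_cast; linarith⟩
      | exact hnu3 ⟨m1 + m2 - m4, by push_cast; linarith⟩
      | exact hnu4 ⟨m1 + m2 - m4 - 1, by push_cast; linarith⟩


lemma planes_sphere_small (nX nY : E) (cX cY : ℝ) (hnX : ‖nX‖ = 1) (hnY : ‖nY‖ = 1)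
    (hne : ¬ ∀ z : E, (⟪nX, z⟫ = cX ↔ ⟪nY, z⟫ = cY)) :
    ∀ x y z : E, (‖x‖ = 1 ∧ ⟪nX, x⟫ = cX ∧ ⟪nY, x⟫ = cY) →
      (‖y‖ = 1 ∧ ⟪nX, y⟫ = cX ∧ ⟪nY, y⟫ = cY) →
      (‖z‖ = 1 ∧ ⟪nX, z⟫ = cX ∧ ⟪nY, z⟫ = cY) →
      x ≠ y → x ≠ z → y ≠ z → False := by
  intro x y z ⟨hx1, hx2, hx3⟩ ⟨hy1, hy2, hy3⟩ ⟨hz1, hz2, hz3⟩ hxy hxz hyz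
  have hnX0 : nX ≠ 0 := by intro h; rw [h] at hnX; simp at hnX
  by_cases hpar : ∃ t : ℝ, nY = t • nX
  · obtain ⟨t, rfl⟩ := hpar
    have ht0 : t ≠ 0 := by
      intro h; rw [h] at hnY; simp at hnY
    have hval : ∀ w : E, ⟪t • nX, w⟫ = t * ⟪nX, w⟫ := by
      intro w; rw [inner_smul_left]; simp
    by_cases hcc : cY = t * cX
    · apply hne
      intro w
      constructor
      · intro h; rw [hval, h, hcc]
      · intro h; rw [hval, hcc] at h
        exact mul_left_cancel₀ ht0 h
    · apply hcc
      rw [← hx3, hval, hx2]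
  · obtain ⟨vv, ⟨s, hs⟩, ⟨t', ht'⟩⟩ := orth_pair_parallel nX (nY) hnX0 hpar (y - x) (z - x)
      (by rw [inner_sub_right, hx2, hy2]; ring)
      (by rw [inner_sub_right, hx3, hy3]; ring)
      (by rw [inner_sub_right, hx2, hz2]; ring)
      (by rw [inner_sub_right, hx3, hz3]; ring)
    exact sphere_line_two hx1 hy1 hz1 s t' hs ht' hxy hxz hyz

lemma small_cover2 (S : Set E)
    (hS : ∀ x y z, x ∈ S → y ∈ S → z ∈ S → x ≠ y → x ≠ z → y ≠ z → False) :
    ∃ a b : E, S ⊆ {a, b} ∧ (a = b ∨ (a ∈ S ∧ b ∈ S)) := by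
  rcases S.eq_empty_or_nonempty with h | ⟨a0, ha0⟩
  · exact ⟨0, 0, by rw [h]; exact Set.empty_subset _, Or.inl rfl⟩
  · obtain ⟨a, b, ha, hb, hcov⟩ := small_cover S hS ha0
    exact ⟨a, b, hcov, Or.inr ⟨ha, hb⟩⟩

lemma card3_of_four (s : Set (Fin 5)) (w1 w2 w3 w4 : Fin 5)
    (h : ∀ w ∈ s, w = w1 ∨ w = w2 ∨ w = w3 ∨ w = w4)
    (hcoll : w1 = w2 ∨ w1 = w3 ∨ w1 = w4 ∨ w2 = w3 ∨ w2 = w4 ∨ w3 = w4) : s.ncard ≤ 3 := by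
  rcases hcoll with h'|h'|h'|h'|h'|h'
  · exact card3 s w2 w3 w4 (fun w hw => by rcases h w hw with rfl|rfl|rfl|rfl <;> simp [h'])
  · exact card3 s w2 w3 w4 (fun w hw => by rcases h w hw with rfl|rfl|rfl|rfl <;> simp [h'])
  · exact card3 s w2 w3 w4 (fun w hw => by rcases h w hw with rfl|rfl|rfl|rfl <;> simp [h'])
  · exact card3 s w1 w3 w4 (fun w hw => by rcases h w hw with rfl|rfl|rfl|rfl <;> simp [h'])
  · exact card3 s w1 w3 w4 (fun w hw => by rcases h w hw with rfl|rfl|rfl|rfl <;> simp [h'])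
  · exact card3 s w1 w2 w4 (fun w hw => by rcases h w hw with rfl|rfl|rfl|rfl <;> simp [h'])


/-- Given two transversally intersecting circles `C₁, C₂` on the standard `2`-sphere, there is
a surjective `5`-coloring of `C₁ ∪ C₂` such that every circle of `S²` meets `C₁ ∪ C₂` in at
most `3` colors. -/
theorem two_circles_coloring
    (A₁ A₂ : AffineSubspace ℝ (EuclideanSpace ℝ (Fin 3)))
    (hA₁ : Module.finrank ℝ A₁.direction = 2) (hb₁ : ∃ x ∈ A₁, ‖x‖ < 1)
    (hA₂ : Module.finrank ℝ A₂.direction = 2) (hb₂ : ∃ x ∈ A₂, ‖x‖ < 1)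
    (htrans : ∃ p q : EuclideanSpace ℝ (Fin 3), p ≠ q ∧
      (Metric.sphere (0 : EuclideanSpace ℝ (Fin 3)) 1 ∩ (A₁ : Set (EuclideanSpace ℝ (Fin 3)))) ∩
        (Metric.sphere (0 : EuclideanSpace ℝ (Fin 3)) 1 ∩ (A₂ : Set (EuclideanSpace ℝ (Fin 3)))) =
        {p, q}) :
    ∃ Γ : ((Metric.sphere (0 : EuclideanSpace ℝ (Fin 3)) 1 ∩ (A₁ : Set (EuclideanSpace ℝ (Fin 3)))) ∪
            (Metric.sphere (0 : EuclideanSpace ℝ (Fin 3)) 1 ∩ (A₂ : Set (EuclideanSpace ℝ (Fin 3)))) :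
            Set (EuclideanSpace ℝ (Fin 3))) → Fin 5,
      Function.Surjective Γ ∧
      ∀ A : AffineSubspace ℝ (EuclideanSpace ℝ (Fin 3)),
        Module.finrank ℝ A.direction = 2 → (∃ x ∈ A, ‖x‖ < 1) →
        (Γ '' {p | (p : EuclideanSpace ℝ (Fin 3)) ∈
            Metric.sphere (0 : EuclideanSpace ℝ (Fin 3)) 1 ∩ (A : Set (EuclideanSpace ℝ (Fin 3)))}).ncard ≤ 3 := by
  classical
  obtain ⟨p, q, hpq, hPQ⟩ := htrans
  obtain ⟨n₁, c₁, hn₁, hc₁, hmem₁⟩ := plane_normal A₁ hA₁ hb₁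
  obtain ⟨n₂, c₂, hn₂, hc₂, hmem₂⟩ := plane_normal A₂ hA₂ hb₂
  have hsphere : ∀ z : E, z ∈ Metric.sphere (0:E) 1 ↔ ‖z‖ = 1 := by
    intro z; rw [mem_sphere_zero_iff_norm]
  have hpin : p ∈ (Metric.sphere (0:E) 1 ∩ (A₁ : Set E)) ∩ (Metric.sphere (0:E) 1 ∩ (A₂ : Set E)) := by
    rw [hPQ]; exact Set.mem_insert _ _
  have hqin : q ∈ (Metric.sphere (0:E) 1 ∩ (A₁ : Set E)) ∩ (Metric.sphere (0:E) 1 ∩ (A₂ : Set E)) := by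
    rw [hPQ]; exact Set.mem_insert_of_mem _ rfl
  have hpS : ‖p‖ = 1 := (hsphere p).mp hpin.1.1
  have hqS : ‖q‖ = 1 := (hsphere q).mp hqin.1.1
  have hp₁ : ⟪n₁, p⟫ = c₁ := (hmem₁ p).mp hpin.1.2
  have hq₁ : ⟪n₁, q⟫ = c₁ := (hmem₁ q).mp hqin.1.2
  have hp₂ : ⟪n₂, p⟫ = c₂ := (hmem₂ p).mp hpin.2.2
  have hq₂ : ⟪n₂, q⟫ = c₂ := (hmem₂ q).mp hqin.2.2
  have hcap : ∀ z : E, ‖z‖ = 1 → ⟪n₁, z⟫ = c₁ → ⟪n₂, z⟫ = c₂ → z = p ∨ z = q := by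
    intro z h1 h2 h3
    have : z ∈ ({p, q} : Set E) := by
      rw [← hPQ]
      exact ⟨⟨(hsphere z).mpr h1, (hmem₁ z).mpr h2⟩, ⟨(hsphere z).mpr h1, (hmem₂ z).mpr h3⟩⟩
    simpa using this
  set L : E → ℝ := fun z => Real.log (dist z q) - Real.log (dist z p) with hLdef
  set F : E → Fin 5 := fun z =>
    if ⟪n₁, z⟫ = c₁ then
      if ⟪n₂, z⟫ = c₂ then (2 : Fin 5)
      else if ∃ m : ℤ, L z = m then 0
      else if ∃ m : ℤ, L z = m + 1/2 then 1 else 2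
    else
      if ∃ m : ℤ, L z = m + 1/4 then 3
      else if ∃ m : ℤ, L z = m + 3/4 then 4 else 2
    with hF
  -- F-value computation lemmas
  have Fval1 : ∀ x : E, ⟪n₁, x⟫ = c₁ → ⟪n₂, x⟫ ≠ c₂ →
      (F x = 0 ∧ ∃ m : ℤ, L x = m) ∨ (F x = 1 ∧ ∃ m : ℤ, L x = m + 1/2) ∨
      (F x = 2 ∧ ¬(∃ m : ℤ, L x = m) ∧ ¬(∃ m : ℤ, L x = m + 1/2)) := by
    intro x h1 h2
    by_cases h3 : ∃ m : ℤ, L x = m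
    · refine Or.inl ⟨?_, h3⟩
      simp only [hF]
      rw [if_pos h1, if_neg h2, if_pos h3]
    · by_cases h4 : ∃ m : ℤ, L x = m + 1/2
      · refine Or.inr (Or.inl ⟨?_, h4⟩)
        simp only [hF]
        rw [if_pos h1, if_neg h2, if_neg h3, if_pos h4]
      · refine Or.inr (Or.inr ⟨?_, h3, h4⟩)
        simp only [hF]
        rw [if_pos h1, if_neg h2, if_neg h3, if_neg h4]
  have Fval2 : ∀ x : E, ⟪n₁, x⟫ ≠ c₁ →
      (F x = 3 ∧ ∃ m : ℤ, L x = m + 1/4) ∨ (F x = 4 ∧ ∃ m : ℤ, L x = m + 3/4) ∨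
      (F x = 2 ∧ ¬(∃ m : ℤ, L x = m + 1/4) ∧ ¬(∃ m : ℤ, L x = m + 3/4)) := by
    intro x h1
    by_cases h3 : ∃ m : ℤ, L x = m + 1/4
    · refine Or.inl ⟨?_, h3⟩
      simp only [hF]
      rw [if_neg h1, if_pos h3]
    · by_cases h4 : ∃ m : ℤ, L x = m + 3/4
      · refine Or.inr (Or.inl ⟨?_, h4⟩)
        simp only [hF]
        rw [if_neg h1, if_neg h3, if_pos h4]
      · refine Or.inr (Or.inr ⟨?_, h3, h4⟩)
        simp only [hF]
        rw [if_neg h1, if_neg h3, if_neg h4]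
  refine ⟨fun z => F ↑z, ?_, ?_⟩
  · -- surjectivity
    have hU1 : ∀ X : E, ‖X‖ = 1 → ⟪n₁, X⟫ = c₁ →
        X ∈ (Metric.sphere (0:E) 1 ∩ (A₁ : Set E)) ∪ (Metric.sphere (0:E) 1 ∩ (A₂ : Set E)) :=
      fun X h1 h2 => Or.inl ⟨(hsphere X).mpr h1, (hmem₁ X).mpr h2⟩
    have hU2 : ∀ X : E, ‖X‖ = 1 → ⟪n₂, X⟫ = c₂ →
        X ∈ (Metric.sphere (0:E) 1 ∩ (A₁ : Set E)) ∪ (Metric.sphere (0:E) 1 ∩ (A₂ : Set E)) :=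
      fun X h1 h2 => Or.inr ⟨(hsphere X).mpr h1, (hmem₂ X).mpr h2⟩
    intro w
    fin_cases w
    · -- color 0 : L = 0 on circle 1
      obtain ⟨X, hX1, hX2, hXp, hXq, hXL⟩ :=
        circle_log_surj n₁ c₁ hn₁ hc₁ p q hpS hp₁ hqS hq₁ hpq 0
      have hXn2 : ⟪n₂, X⟫ ≠ c₂ := by
        intro h
        rcases hcap X hX1 hX2 h with rfl | rfl
        · exact hXp rfl
        · exact hXq rfl
      have hLX : L X = ((0:ℤ):ℝ) := by
        simp only [hLdef]
        rw [hXL]; norm_num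
      refine ⟨⟨X, hU1 X hX1 hX2⟩, ?_⟩
      rcases Fval1 X hX2 hXn2 with ⟨h, -⟩ | ⟨-, m, hm⟩ | ⟨-, hh, -⟩
      · exact h
      · exfalso
        rw [hLX] at hm
        exact half_ne_int (0 - m) (by push_cast; linarith)
      · exact absurd ⟨0, hLX⟩ hh
    · -- color 1 : L = 1/2 on circle 1
      obtain ⟨X, hX1, hX2, hXp, hXq, hXL⟩ :=
        circle_log_surj n₁ c₁ hn₁ hc₁ p q hpS hp₁ hqS hq₁ hpq (1/2)
      have hXn2 : ⟪n₂, X⟫ ≠ c₂ := by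
        intro h
        rcases hcap X hX1 hX2 h with rfl | rfl
        · exact hXp rfl
        · exact hXq rfl
      have hLX : L X = ((0:ℤ):ℝ) + 1/2 := by
        simp only [hLdef]
        rw [hXL]; norm_num
      refine ⟨⟨X, hU1 X hX1 hX2⟩, ?_⟩
      rcases Fval1 X hX2 hXn2 with ⟨-, m, hm⟩ | ⟨h, -⟩ | ⟨-, -, hh⟩
      · exfalso
        rw [hLX] at hm
        exact half_ne_int (m - 0) (by push_cast; linarith)
      · exact h
      · exact absurd ⟨0, hLX⟩ hh
    · -- color 2 : the point p
      refine ⟨⟨p, hU1 p hpS hp₁⟩, ?_⟩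
      show F p = 2
      simp only [hF]
      rw [if_pos hp₁, if_pos hp₂]
    · -- color 3 : L = 1/4 on circle 2
      obtain ⟨X, hX1, hX2, hXp, hXq, hXL⟩ :=
        circle_log_surj n₂ c₂ hn₂ hc₂ p q hpS hp₂ hqS hq₂ hpq (1/4)
      have hXn1 : ⟪n₁, X⟫ ≠ c₁ := by
        intro h
        rcases hcap X hX1 h hX2 with rfl | rfl
        · exact hXp rfl
        · exact hXq rfl
      have hLX : L X = ((0:ℤ):ℝ) + 1/4 := by
        simp only [hLdef]
        rw [hXL]; norm_num
      refine ⟨⟨X, hU2 X hX1 hX2⟩, ?_⟩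
      rcases Fval2 X hXn1 with ⟨h, -⟩ | ⟨-, m, hm⟩ | ⟨-, hh, -⟩
      · exact h
      · exfalso
        rw [hLX] at hm
        exact half_ne_int (0 - m) (by push_cast; linarith)
      · exact absurd ⟨0, hLX⟩ hh
    · -- color 4 : L = 3/4 on circle 2
      obtain ⟨X, hX1, hX2, hXp, hXq, hXL⟩ :=
        circle_log_surj n₂ c₂ hn₂ hc₂ p q hpS hp₂ hqS hq₂ hpq (3/4)
      have hXn1 : ⟪n₁, X⟫ ≠ c₁ := by
        intro h
        rcases hcap X hX1 h hX2 with rfl | rfl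
        · exact hXp rfl
        · exact hXq rfl
      have hLX : L X = ((0:ℤ):ℝ) + 3/4 := by
        simp only [hLdef]
        rw [hXL]; norm_num
      refine ⟨⟨X, hU2 X hX1 hX2⟩, ?_⟩
      rcases Fval2 X hXn1 with ⟨-, m, hm⟩ | ⟨h, -⟩ | ⟨-, -, hh⟩
      · exfalso
        rw [hLX] at hm
        exact half_ne_int (m - 0) (by push_cast; linarith)
      · exact h
      · exact absurd ⟨0, hLX⟩ hh
  · -- every circle sees at most 3 colors
    intro A hA hbA
    obtain ⟨nA, cA, hnA, hcA, hmemA⟩ := plane_normal A hA hbA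
    by_cases hd1 : A = A₁
    · subst hd1
      apply card3 _ 0 1 2
      rintro w ⟨z, hz, rfl⟩
      have h1 : ⟪n₁, (z : E)⟫ = c₁ := (hmem₁ _).mp hz.2
      simp only [hF]
      rw [if_pos h1]
      split_ifs <;> simp
    · by_cases hd2 : A = A₂
      · subst hd2
        apply card3 _ 2 3 4
        rintro w ⟨z, hz, rfl⟩
        have h2 : ⟪n₂, (z : E)⟫ = c₂ := (hmem₂ _).mp hz.2
        have hzS : ‖(z : E)‖ = 1 := (hsphere _).mp hz.1
        by_cases h1 : ⟪n₁, (z : E)⟫ = c₁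
        · simp only [hF]
          rw [if_pos h1, if_pos h2]
          simp
        · simp only [hF]
          rw [if_neg h1]
          split_ifs <;> simp
      · -- generic circle
        have hiff1 : ¬ ∀ z : E, (⟪nA, z⟫ = cA ↔ ⟪n₁, z⟫ = c₁) := by
          intro hiff
          apply hd1
          apply SetLike.ext
          intro z
          rw [hmemA z, hmem₁ z, hiff z]
        have hiff2 : ¬ ∀ z : E, (⟪nA, z⟫ = cA ↔ ⟪n₂, z⟫ = c₂) := by
          intro hiff
          apply hd2
          apply SetLike.ext
          intro z
          rw [hmemA z, hmem₂ z, hiff z]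
        set S1 : Set E := {x : E | ‖x‖ = 1 ∧ ⟪nA, x⟫ = cA ∧ ⟪n₁, x⟫ = c₁} with hS1def
        set S2 : Set E := {x : E | ‖x‖ = 1 ∧ ⟪nA, x⟫ = cA ∧ ⟪n₂, x⟫ = c₂} with hS2def
        obtain ⟨a, b, hcov1, hcase1⟩ := small_cover2 S1
          (fun x y z hx hy hz => planes_sphere_small nA n₁ cA c₁ hnA hn₁ hiff1 x y z hx hy hz)
        obtain ⟨u, v, hcov2, hcase2⟩ := small_cover2 S2
          (fun x y z hx hy hz => planes_sphere_small nA n₂ cA c₂ hnA hn₂ hiff2 x y z hx hy hz)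
        -- any image point is one of the four values
        have hmem4 : ∀ w ∈ ((fun z : ↥((Metric.sphere (0:E) 1 ∩ (A₁ : Set E)) ∪ (Metric.sphere (0:E) 1 ∩ (A₂ : Set E))) => F ↑z) ''
            {z : ↥((Metric.sphere (0:E) 1 ∩ (A₁ : Set E)) ∪ (Metric.sphere (0:E) 1 ∩ (A₂ : Set E))) |
              ↑z ∈ Metric.sphere (0:E) 1 ∩ (A : Set E)}),
            w = F a ∨ w = F b ∨ w = F u ∨ w = F v := by
          rintro w ⟨z, hz, rfl⟩
          have hznorm : ‖(z : E)‖ = 1 := (hsphere _).mp hz.1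
          have hzA : ⟪nA, (z : E)⟫ = cA := (hmemA _).mp hz.2
          rcases z.2 with h | h
          · have hzS1 : (z : E) ∈ S1 := ⟨hznorm, hzA, (hmem₁ _).mp h.2⟩
            have h' := hcov1 hzS1
            simp only [Set.mem_insert_iff, Set.mem_singleton_iff] at h'
            rcases h' with h' | h'
            · exact Or.inl (by show F (↑z) = F a; rw [h'])
            · exact Or.inr (Or.inl (by show F (↑z) = F b; rw [h']))
          · have hzS2 : (z : E) ∈ S2 := ⟨hznorm, hzA, (hmem₂ _).mp h.2⟩
            have h' := hcov2 hzS2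
            simp only [Set.mem_insert_iff, Set.mem_singleton_iff] at h'
            rcases h' with h' | h'
            · exact Or.inr (Or.inr (Or.inl (by show F (↑z) = F u; rw [h'])))
            · exact Or.inr (Or.inr (Or.inr (by show F (↑z) = F v; rw [h'])))
        by_cases hcoll : F a = F b ∨ F a = F u ∨ F a = F v ∨ F b = F u ∨ F b = F v ∨ F u = F v
        · apply card3_of_four _ (F a) (F b) (F u) (F v) hmem4
          tauto
        · push_neg at hcoll
          obtain ⟨hcab, hcau, hcav, hcbu, hcbv, hcuv⟩ := hcoll
          exfalso
          -- S1 and S2 must be nonempty, else coincidences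
          rcases hcase1 with hS1e | ⟨haS1, hbS1⟩
          · exact hcab (by rw [hS1e])
          rcases hcase2 with hS2e | ⟨huS2, hvS2⟩
          · exact hcuv (by rw [hS2e])
          -- p and q are not on the plane A
          have hplane : ∀ w : E, ‖w‖ = 1 → ⟪n₁, w⟫ = c₁ → ⟪n₂, w⟫ = c₂ →
              ⟪nA, w⟫ ≠ cA := by
            intro w hwS hw1 hw2 hcon
            have h1 := hcov1 ⟨hwS, hcon, hw1⟩
            have h2 := hcov2 ⟨hwS, hcon, hw2⟩
            simp only [Set.mem_insert_iff, Set.mem_singleton_iff] at h1 h2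
            rcases h1 with h1 | h1 <;> rcases h2 with h2 | h2
            · exact hcau (by rw [← h1, ← h2])
            · exact hcav (by rw [← h1, ← h2])
            · exact hcbu (by rw [← h1, ← h2])
            · exact hcbv (by rw [← h1, ← h2])
          have hpA : ⟪nA, p⟫ ≠ cA := hplane p hpS hp₁ hp₂
          have hqA : ⟪nA, q⟫ ≠ cA := hplane q hqS hq₁ hq₂
          obtain ⟨haS, haA, ha₁⟩ := haS1
          obtain ⟨hbS, hbA, hb₁⟩ := hbS1
          obtain ⟨huS, huA, hu₂⟩ := huS2
          obtain ⟨hvS, hvA, hv₂⟩ := hvS2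
          have hap : a ≠ p := fun h => hpA (h ▸ haA)
          have haq : a ≠ q := fun h => hqA (h ▸ haA)
          have hbp : b ≠ p := fun h => hpA (h ▸ hbA)
          have hbq : b ≠ q := fun h => hqA (h ▸ hbA)
          have hup : u ≠ p := fun h => hpA (h ▸ huA)
          have huq : u ≠ q := fun h => hqA (h ▸ huA)
          have hvp : v ≠ p := fun h => hpA (h ▸ hvA)
          have hvq : v ≠ q := fun h => hqA (h ▸ hvA)
          have hab : a ≠ b := fun h => hcab (by rw [h])
          have huv : u ≠ v := fun h => hcuv (by rw [h])
          have han2 : ⟪n₂, a⟫ ≠ c₂ := by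
            intro h
            rcases hcap a haS ha₁ h with rfl | rfl
            · exact hap rfl
            · exact haq rfl
          have hbn2 : ⟪n₂, b⟫ ≠ c₂ := by
            intro h
            rcases hcap b hbS hb₁ h with rfl | rfl
            · exact hbp rfl
            · exact hbq rfl
          have hun1 : ⟪n₁, u⟫ ≠ c₁ := by
            intro h
            rcases hcap u huS h hu₂ with rfl | rfl
            · exact hup rfl
            · exact huq rfl
          have hvn1 : ⟪n₁, v⟫ ≠ c₁ := by
            intro h
            rcases hcap v hvS h hv₂ with rfl | rfl
            · exact hvp rfl
            · exact hvq rfl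
          have hsum : L a + L b = L u + L v := by
            simp only [hLdef]
            exact key_power p q a b u v hpS hqS haS hbS huS hvS n₁ c₁ hn₁ hc₁ hp₁ hq₁ ha₁ hb₁
              n₂ c₂ hn₂ hc₂ hp₂ hq₂ hu₂ hv₂ nA cA hnA hcA haA hbA huA hvA hpA hqA
              hab huv hap haq hbp hbq hup huq hvp hvq (Ne.symm hpq)
          exact no_bad (L a) (L b) (L u) (L v) hsum (F a) (F b) (F u) (F v)
            (Fval1 a ha₁ han2) (Fval1 b hb₁ hbn2) (Fval2 u hun1) (Fval2 v hvn1)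
            hcab hcuv hcau hcav hcbu hcbv

end
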